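/- Let θ* = θ*(α,γ) ∈ (0, π/2) be the unique solution of γ/α = 4θ tan θ, and define the fixation rate κ = 4αθ*². Then as the ratio γ/α → 0 (with, say, γ fixed), κ = γ·(1 - γ/(12α) + O(γ²/α²)); in particular κ/γ → 1 and (1 - κ/γ)·(12α/γ) → 1. -/

import Mathlib

open Filter Real

/-- `tan t / t → 1` as `t → 0` (punctured). -/
lemma aux_tan_div_self : Tendsto (fun t : ℝ => Real.tan t / t) (nhdsWithin 0 {(0:ℝ)}ᶜ) (nhds 1) := by
  have h : HasDerivAt Real.tan (1 / Real.cos 0 ^ 2) 0 := Real.hasDerivAt_tan (by simp)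
  have h1 : (1 : ℝ) / Real.cos 0 ^ 2 = 1 := by simp
  rw [h1] at h
  have := hasDerivAt_iff_tendsto_slope.mp h
  refine this.congr' ?_
  filter_upwards [self_mem_nhdsWithin] with t ht
  simp [slope_def_field, Real.tan_zero]

lemma aux_tan_div_self_right : Tendsto (fun t : ℝ => Real.tan t / t) (nhdsWithin 0 (Set.Ioi 0)) (nhds 1) :=
  aux_tan_div_self.mono_left (nhdsWithin_mono _ (fun x hx => ne_of_gt hx))

/-- `(tan t - t)/t³ → 1/3` as `t → 0⁺`, by L'Hôpital. -/
lemma aux_tan_sub_cube : Tendsto (fun t : ℝ => (Real.tan t - t) / t ^ 3)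
    (nhdsWithin 0 (Set.Ioi 0)) (nhds (1/3)) := by
  have hIoo : Set.Ioo (0:ℝ) (Real.pi/2) ∈ nhdsWithin (0:ℝ) (Set.Ioi 0) :=
    Ioo_mem_nhdsGT_of_mem (by constructor <;> [rfl; positivity])
  apply HasDerivAt.lhopital_zero_nhdsGT
    (f' := fun t => Real.tan t ^ 2) (g' := fun t => 3 * t ^ 2)
  · filter_upwards [hIoo] with t ht
    have hc : Real.cos t ≠ 0 :=
      (Real.cos_pos_of_mem_Ioo ⟨by linarith [ht.1, Real.pi_pos], ht.2⟩).ne'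
    have h := (Real.hasDerivAt_tan hc).sub (hasDerivAt_id t)
    have he : 1 / Real.cos t ^ 2 - 1 = Real.tan t ^ 2 := by
      rw [Real.tan_eq_sin_div_cos]
      have := Real.sin_sq_add_cos_sq t
      field_simp
      nlinarith
    rwa [he] at h
  · filter_upwards [] with t
    simpa using (hasDerivAt_pow 3 t)
  · filter_upwards [self_mem_nhdsWithin] with t ht
    have : (0:ℝ) < t := ht
    positivity
  · have hc : Tendsto (fun t : ℝ => Real.tan t - t) (nhds 0) (nhds 0) := by
      have : ContinuousAt (fun t : ℝ => Real.tan t - t) 0 :=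
        ((Real.continuousAt_tan.mpr (by simp)).sub continuousAt_id)
      simpa using this.tendsto
    exact hc.mono_left nhdsWithin_le_nhds
  · have : Tendsto (fun t : ℝ => t ^ 3) (nhds 0) (nhds 0) := by
      simpa using (continuous_pow 3).tendsto (0:ℝ)
    exact this.mono_left nhdsWithin_le_nhds
  · have h := (aux_tan_div_self_right.pow 2).div_const 3
    norm_num at h
    refine h.congr fun t => ?_
    rw [div_pow, div_div]
    ring_nf

/-- Fast-migration asymptotics of the fixation rate `κ = 4 α θ*(α)²`, where
`θ*(α) ∈ (0, π/2)` is the unique solution of `γ/α = 4 θ tan θ`.  As `γ/α → 0`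
(with `γ` fixed, i.e. `α → ∞`), `κ = γ (1 - γ/(12α) + O(γ²/α²))`; in
particular `κ/γ → 1` and `(1 - κ/γ)·(12α/γ) → 1`. -/
theorem stmt_1 (γ : ℝ) (hγ : 0 < γ) (θ : ℝ → ℝ)
    (hθmem : ∀ α : ℝ, 0 < α → θ α ∈ Set.Ioo 0 (Real.pi / 2))
    (hθeq : ∀ α : ℝ, 0 < α → γ / α = 4 * θ α * Real.tan (θ α)) :
    Tendsto (fun α : ℝ => 4 * α * (θ α) ^ 2 / γ) atTop (nhds 1) ∧
    Tendsto (fun α : ℝ => (1 - 4 * α * (θ α) ^ 2 / γ) * (12 * α / γ)) atTop (nhds 1) := by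
  have hpos : ∀ᶠ α : ℝ in atTop, 0 < α := eventually_gt_atTop 0
  -- θ α ≤ sqrt (γ / (4 α)) for α > 0
  have hbound : ∀ α : ℝ, 0 < α → θ α ≤ Real.sqrt (γ / (4 * α)) := by
    intro α hα
    obtain ⟨h1, h2⟩ := hθmem α hα
    have htan : θ α < Real.tan (θ α) := Real.lt_tan h1 h2
    have hsq : (θ α) ^ 2 ≤ γ / (4 * α) := by
      have heq := hθeq α hα
      have : γ / (4 * α) = θ α * Real.tan (θ α) := by
        field_simp at heq ⊢
        linarith [heq]
      rw [this]
      nlinarith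
    exact (Real.le_sqrt h1.le (by positivity)).mpr hsq
  -- θ α → 0 within Ioi 0
  have hθ0 : Tendsto θ atTop (nhdsWithin 0 (Set.Ioi 0)) := by
    rw [tendsto_nhdsWithin_iff]
    constructor
    · apply squeeze_zero' (by filter_upwards [hpos] with α hα; exact (hθmem α hα).1.le)
        (by filter_upwards [hpos] with α hα; exact hbound α hα)
      have h1 : Tendsto (fun α : ℝ => γ / (4 * α)) atTop (nhds 0) :=
        Tendsto.div_atTop tendsto_const_nhds
          (Tendsto.const_mul_atTop (by norm_num) tendsto_id)
      have := (Real.continuous_sqrt.tendsto 0).comp h1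
      simpa [Function.comp_def] using this
    · filter_upwards [hpos] with α hα
      exact (hθmem α hα).1
  have htanpos : ∀ α : ℝ, 0 < α → 0 < Real.tan (θ α) := by
    intro α hα
    obtain ⟨h1, h2⟩ := hθmem α hα
    exact Real.tan_pos_of_pos_of_lt_pi_div_two h1 h2
  -- first limit: 4αθ²/γ = θ/tanθ
  have hfirst : Tendsto (fun α : ℝ => 4 * α * (θ α) ^ 2 / γ) atTop (nhds 1) := by
    have hcomp : Tendsto (fun α : ℝ => Real.tan (θ α) / θ α) atTop (nhds 1) :=
      aux_tan_div_self_right.comp hθ0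
    have hinv := hcomp.inv₀ (by norm_num)
    rw [inv_one] at hinv
    refine hinv.congr' ?_
    filter_upwards [hpos] with α hα
    obtain ⟨h1, _⟩ := hθmem α hα
    have ht := htanpos α hα
    have heq := hθeq α hα
    have hγeq : γ = 4 * α * θ α * Real.tan (θ α) := by
      field_simp at heq
      linarith
    rw [inv_div]
    rw [hγeq]
    field_simp
  refine ⟨hfirst, ?_⟩
  -- second limit
  have hcomp : Tendsto
      (fun α : ℝ => (Real.tan (θ α) - θ α) / (θ α) ^ 3 * 3 * (θ α / Real.tan (θ α)) ^ 2)
      atTop (nhds 1) := by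
    have h1 := aux_tan_sub_cube.comp hθ0
    have h2 : Tendsto (fun α : ℝ => θ α / Real.tan (θ α)) atTop (nhds 1) := by
      have := (aux_tan_div_self_right.comp hθ0).inv₀ (by norm_num)
      rw [inv_one] at this
      refine this.congr ?_
      intro α
      simp [Function.comp, inv_div]
    have := (h1.mul_const 3).mul (h2.pow 2)
    norm_num at this
    exact this
  refine hcomp.congr' ?_
  filter_upwards [hpos] with α hα
  obtain ⟨h1, _⟩ := hθmem α hα
  have ht := htanpos α hα
  have heq := hθeq α hα
  have hγeq : γ = 4 * α * θ α * Real.tan (θ α) := by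
    field_simp at heq
    linarith
  rw [hγeq]
  field_simp
  ring
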